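/- Let ε ∈ (0,1) and let F* ≥ 0. Suppose a sequence (a_j)_{j=0}^{1/ε} of reals satisfies a_0 = 0 and for each j ≥ 1, a_j ≥ a_{j-1} + (1 - 5ε)·ε·((1-ε)^j F* - a_j - 3ε F*). Then for every j, a_j ≥ ε j (1-ε)^j F* - 9 j ε^2 F*. -/

import Mathlib

lemma key_stmt3 (ε Q n : ℝ) (h0 : 0 < ε) (h2 : ε ≤ 1/2) (hQ0 : 0 ≤ Q) (hQ1 : Q ≤ 1)
    (hn : 0 ≤ n) (hne : (n+1)*ε ≤ 1) :
    0 ≤ ε*n*Q - 9*n*ε^2 + ε*(1-5*ε)*((1-ε)*Q - 3*ε)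
        - (1+ε*(1-5*ε))*(ε*(n+1)*(1-ε)*Q - 9*(n+1)*ε^2) := by
  have hε2 : (0:ℝ) ≤ 1 - 2*ε := by linarith
  have hnε : 0 ≤ 1 - ε - n*ε := by nlinarith
  rcases le_or_gt 0 (9 + 6*Q - 45*ε - 5*ε*Q) with hB | hB
  · nlinarith [mul_nonneg (mul_nonneg (mul_nonneg (mul_nonneg h0.le h0.le) h0.le) hn) hB,
      mul_nonneg (mul_nonneg h0.le h0.le) (sub_nonneg.2 hQ1),
      mul_nonneg (mul_nonneg (mul_nonneg h0.le h0.le) h0.le) hε2,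
      mul_nonneg (mul_nonneg (mul_nonneg (mul_nonneg h0.le h0.le) h0.le) hQ0) hε2,
      mul_nonneg (mul_nonneg h0.le h0.le) h0.le,
      mul_nonneg (mul_nonneg (mul_nonneg h0.le h0.le) h0.le) hQ0]
  · nlinarith [mul_nonneg (mul_nonneg (mul_nonneg h0.le h0.le) hnε)
        (by linarith : (0:ℝ) ≤ -(9 + 6*Q - 45*ε - 5*ε*Q)),
      mul_nonneg (mul_nonneg h0.le h0.le) hε2]

theorem stmt_3 (ε : ℝ) (hε : ε ∈ Set.Ioo (0:ℝ) 1) (F : ℝ) (hF : 0 ≤ F)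
    (m : ℕ) (hm : (m : ℝ) * ε = 1) (a : ℕ → ℝ) (h0 : a 0 = 0)
    (hrec : ∀ j, 1 ≤ j → j ≤ m →
      a j ≥ a (j - 1) + (1 - 5 * ε) * ε * ((1 - ε) ^ j * F - a j - 3 * ε * F)) :
    ∀ j ≤ m, a j ≥ ε * j * (1 - ε) ^ j * F - 9 * j * ε ^ 2 * F := by
  obtain ⟨hε0, hε1⟩ := hε
  have hm2 : 2 ≤ m := by
    by_contra h
    interval_cases m <;> simp_all
  have hεhalf : ε ≤ 1/2 := by
    have : (2:ℝ) ≤ m := by exact_mod_cast hm2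
    nlinarith
  intro j hj
  induction j with
  | zero => simp [h0]
  | succ n ih =>
    have hn : n ≤ m := Nat.le_of_succ_le hj
    have ihn := ih hn
    have hrecn := hrec (n+1) (Nat.succ_le_succ (Nat.zero_le n)) hj
    simp only [Nat.add_sub_cancel] at hrecn
    have hne : ((n:ℝ)+1) * ε ≤ 1 := by
      have hc : ((n:ℝ)+1) ≤ (m:ℝ) := by exact_mod_cast hj
      calc ((n:ℝ)+1) * ε ≤ (m:ℝ) * ε := by
            exact mul_le_mul_of_nonneg_right hc hε0.le
        _ = 1 := hm
    set Q : ℝ := (1-ε)^n with hQdef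
    have hQ0 : 0 ≤ Q := pow_nonneg (by linarith) n
    have hQ1 : Q ≤ 1 := pow_le_one₀ (by linarith) (by linarith)
    have hpow : (1-ε)^(n+1) = (1-ε) * Q := by rw [hQdef, pow_succ]; ring
    have hkey := key_stmt3 ε Q n hε0 hεhalf hQ0 hQ1 (Nat.cast_nonneg n) hne
    have h1c : (0:ℝ) < 1 + ε*(1-5*ε) := by nlinarith
    rw [hpow] at hrecn
    -- a(n+1)*(1+c) ≥ a n + c*((1-ε)*Q*F - 3εF)
    have hstep : (1 + ε*(1-5*ε)) * a (n+1) ≥ a n + ε*(1-5*ε)*((1-ε)*Q*F - 3*ε*F) := by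
      nlinarith [hrecn]
    have hgoalmul : (1 + ε*(1-5*ε)) * a (n+1) ≥
        (1 + ε*(1-5*ε)) * (ε*((n:ℝ)+1)*((1-ε)*Q)*F - 9*((n:ℝ)+1)*ε^2*F) := by
      have hkF := mul_nonneg hkey hF
      nlinarith [hstep, ihn, hkF]
    have := (mul_le_mul_iff_right₀ h1c).mp hgoalmul
    push_cast
    rw [hpow]
    push_cast at this
    linarith
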